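/- Let C ≥ 2, set θ₀ = 1/(32 C²), and let 0 < ε₀ < (7/32) θ₀ √π. Let x₀ ∈ ℝ², r₁ > 0, 0 < ε ≤ 1 with θ₀ ε ≤ r₁/2, and let u : B_{r₁}(x₀) → ℝ³ be continuous with |u| ≤ 1, satisfying |u(x) − u(y)| ≤ C (|x−y|/ε)^{1/2} for all x, y ∈ B_{r₁}(x₀) and ∫_{B_{r₁}(x₀)} (1/(4ε²)) (1−|u(x)|²)² dx ≤ ε₀². Then |u(x)| ≥ ½ for all x ∈ B_{r₁/2}(x₀). -/

import Mathlib

open MeasureTheory Real Filter Topology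

noncomputable section

abbrev E2 : Type := EuclideanSpace ℝ (Fin 2)
abbrev E3 : Type := EuclideanSpace ℝ (Fin 3)

set_option maxHeartbeats 1000000 in
/-- **Lower bound on the modulus (Step 2 of Theorem 3.1).** If `u` is continuous with
`|u| ≤ 1` on `B_{r₁}(x₀)`, satisfies the Hölder estimate `|u(x)−u(y)| ≤ C(|x−y|/ε)^{1/2}`,
and the penalization energy is smaller than `ε₀² < ((7/32)θ₀√π)²` with `θ₀ = 1/(32C²)`,
then `|u| ≥ ½` on `B_{r₁/2}(x₀)`. -/
theorem modulus_lower_bound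
    (C : ℝ) (hC : 2 ≤ C) (θ₀ : ℝ) (hθ₀ : θ₀ = 1/(32*C^2))
    (ε₀ : ℝ) (hε₀pos : 0 < ε₀) (hε₀ : ε₀ < (7/32) * θ₀ * Real.sqrt π)
    (x₀ : E2) (r₁ : ℝ) (hr₁ : 0 < r₁)
    (ε : ℝ) (hε : 0 < ε) (hε1 : ε ≤ 1) (hscale : θ₀ * ε ≤ r₁/2)
    (u : E2 → E3)
    (hu : ContinuousOn u (Metric.ball x₀ r₁))
    (hu1 : ∀ x ∈ Metric.ball x₀ r₁, ‖u x‖ ≤ 1)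
    (hhold : ∀ x ∈ Metric.ball x₀ r₁, ∀ y ∈ Metric.ball x₀ r₁,
      ‖u x - u y‖ ≤ C * Real.sqrt (‖x - y‖ / ε))
    (hpen : (∫ x in Metric.ball x₀ r₁, 1/(4*ε^2) * (1 - ‖u x‖ ^ 2) ^ 2) ≤ ε₀ ^ 2) :
    ∀ x ∈ Metric.ball x₀ (r₁/2), (1:ℝ)/2 ≤ ‖u x‖ := by
  intro x hx
  by_contra hlt
  push_neg at hlt
  have hCpos : (0:ℝ) < C := by linarith
  have hθpos : 0 < θ₀ := by rw [hθ₀]; positivity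
  set f : E2 → ℝ := fun y => 1/(4*ε^2) * (1 - ‖u y‖ ^ 2) ^ 2 with hf
  set ρ : ℝ := θ₀ * ε with hρ
  have hρpos : 0 < ρ := by positivity
  have hsub : Metric.ball x ρ ⊆ Metric.ball x₀ r₁ := by
    intro y hy
    have h1 : dist y x < ρ := Metric.mem_ball.mp hy
    have h2 : dist x x₀ < r₁/2 := Metric.mem_ball.mp hx
    have := dist_triangle y x x₀
    have : dist y x₀ < r₁ := by linarith
    exact Metric.mem_ball.mpr this
  have hxball : x ∈ Metric.ball x₀ r₁ := hsub (Metric.mem_ball_self hρpos)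
  -- On the small ball, ‖u y‖ ≤ 3/4
  have hsmall : ∀ y ∈ Metric.ball x ρ, ‖u y‖ ≤ 3/4 := by
    intro y hy
    have hyball := hsub hy
    have hd : ‖x - y‖ < ρ := by
      have := Metric.mem_ball.mp hy
      rw [dist_comm] at this
      rwa [← dist_eq_norm]
    have hsq : Real.sqrt (‖x - y‖ / ε) ≤ Real.sqrt θ₀ := by
      apply Real.sqrt_le_sqrt
      rw [div_le_iff₀ hε]
      nlinarith [norm_nonneg (x - y)]
    have hsqθ : Real.sqrt θ₀ ≤ 1/(4*C) := by
      have h1 : θ₀ ≤ (1/(4*C))^2 := by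
        have he : (1/(4*C))^2 = 1/(16*C^2) := by field_simp; ring
        rw [hθ₀, he]
        apply one_div_le_one_div_of_le (by positivity)
        nlinarith
      calc Real.sqrt θ₀ ≤ Real.sqrt ((1/(4*C))^2) := Real.sqrt_le_sqrt h1
        _ = 1/(4*C) := Real.sqrt_sq (by positivity)
    have hh := hhold x hxball y hyball
    have hCs : C * Real.sqrt (‖x - y‖ / ε) ≤ 1/4 := by
      calc C * Real.sqrt (‖x - y‖ / ε) ≤ C * (1/(4*C)) := by
            apply mul_le_mul_of_nonneg_left (hsq.trans hsqθ) hCpos.le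
        _ = 1/4 := by field_simp
    have := norm_sub_norm_le (u y) (u x)
    have hxy : ‖u y - u x‖ ≤ 1/4 := by
      rw [norm_sub_rev] at hh
      linarith
    linarith
  -- f ≥ 49/(1024 ε²) on the small ball
  have hfc : ∀ y ∈ Metric.ball x ρ, 49/(1024*ε^2) ≤ f y := by
    intro y hy
    have h1 := hsmall y hy
    have h2 : (0:ℝ) ≤ ‖u y‖ := norm_nonneg _
    have h3 : ‖u y‖^2 ≤ 9/16 := by nlinarith
    have h4 : (7:ℝ)/16 ≤ 1 - ‖u y‖^2 := by linarith
    have h5 : (49:ℝ)/256 ≤ (1 - ‖u y‖^2)^2 := by nlinarith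
    have h7 : 49/(1024*ε^2) = 1/(4*ε^2)*(49/256) := by field_simp; ring
    show 49/(1024*ε^2) ≤ 1/(4*ε^2) * (1 - ‖u y‖^2)^2
    rw [h7]
    exact mul_le_mul_of_nonneg_left h5 (by positivity)
  -- integrability of f on the big ball
  have hmeas : MeasurableSet (Metric.ball x₀ r₁) := measurableSet_ball
  have hfin : volume (Metric.ball x₀ r₁) ≠ ⊤ := measure_ball_lt_top.ne
  have hfm : AEStronglyMeasurable f (volume.restrict (Metric.ball x₀ r₁)) := by
    apply ContinuousOn.aestronglyMeasurable _ hmeas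
    apply ContinuousOn.mul continuousOn_const
    exact ((continuousOn_const.sub ((hu.norm).pow 2)).pow 2)
  have hbd : ∀ᵐ y ∂(volume.restrict (Metric.ball x₀ r₁)), ‖f y‖ ≤ 1/(4*ε^2) := by
    filter_upwards [self_mem_ae_restrict hmeas] with y hy
    have h1 := hu1 y hy
    have h2 : (0:ℝ) ≤ ‖u y‖ := norm_nonneg _
    have ht2 : ‖u y‖^2 ≤ 1 := by nlinarith
    have h3 : (1 - ‖u y‖^2)^2 ≤ 1 := by nlinarith [sq_nonneg (‖u y‖)]
    rw [hf, Real.norm_eq_abs, abs_of_nonneg (by positivity)]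
    calc 1/(4*ε^2) * (1 - ‖u y‖^2)^2 ≤ 1/(4*ε^2) * 1 := by
          apply mul_le_mul_of_nonneg_left h3 (by positivity)
      _ = 1/(4*ε^2) := mul_one _
  have hfi : IntegrableOn f (Metric.ball x₀ r₁) volume :=
    ⟨hfm, HasFiniteIntegral.restrict_of_bounded _ hfin.lt_top hbd⟩
  -- lower bound on the integral over the small ball
  have hsmeas : MeasurableSet (Metric.ball x ρ) := measurableSet_ball
  have hsfin : volume (Metric.ball x ρ) ≠ ⊤ := measure_ball_lt_top.ne
  have hint1 : 49/(1024*ε^2) * (volume (Metric.ball x ρ)).toReal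
      ≤ ∫ y in Metric.ball x ρ, f y := by
    apply setIntegral_ge_of_const_le_real hsmeas hsfin hfc
    exact hfi.mono_set hsub
  have hint2 : (∫ y in Metric.ball x ρ, f y) ≤ ∫ y in Metric.ball x₀ r₁, f y := by
    apply setIntegral_mono_set hfi
    · filter_upwards with y
      rw [hf]; positivity
    · exact HasSubset.Subset.eventuallyLE hsub
  -- compute the volume
  have hvol : (volume (Metric.ball x ρ)).toReal = π * ρ^2 := by
    rw [EuclideanSpace.volume_ball]
    simp only [Fintype.card_fin]
    rw [show ((2:ℕ):ℝ)/2 + 1 = 2 by norm_num]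
    rw [Real.Gamma_two]
    rw [ENNReal.toReal_mul, ← ENNReal.ofReal_pow hρpos.le]
    rw [ENNReal.toReal_ofReal (by positivity), ENNReal.toReal_ofReal (by positivity)]
    rw [Real.sq_sqrt Real.pi_pos.le]
    ring
  have hπ : (Real.sqrt π)^2 = π := Real.sq_sqrt Real.pi_pos.le
  have hfinal : ε₀^2 < 49/(1024*ε^2) * (π * ρ^2) := by
    have h1 : ε₀^2 < ((7/32) * θ₀ * Real.sqrt π)^2 := by
      have hpos : 0 < (7/32) * θ₀ * Real.sqrt π := lt_trans hε₀pos hε₀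
      nlinarith
    have h2 : ((7/32) * θ₀ * Real.sqrt π)^2 = 49/1024 * θ₀^2 * π := by
      rw [mul_pow, mul_pow, hπ]; ring
    rw [hρ]
    have h3 : 49/(1024*ε^2) * (π * (θ₀*ε)^2) = 49/1024 * θ₀^2 * π := by
      rw [mul_pow, div_mul_eq_mul_div, div_eq_iff (by positivity : (1024:ℝ)*ε^2 ≠ 0)]
      ring
    rw [h3, ← h2]; exact h1
  rw [hvol] at hint1
  linarith
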